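/- arXiv:2012.02392 — 2 statements merged into one kernel-verified Lean document; each statement's English description precedes it below -/
import Mathlib

section
/- For a Poisson random variable X with mean μ > 0 and a nonempty finite set A of nonnegative integers with P(X ∈ A) > 0, the derivative with respect to μ of the conditional expectation E[X | X ∈ A] equals (1/μ)·Var[X | X ∈ A], which is nonnegative, with equality to zero if and only if A is a singleton. -/
open scoped BigOperators

/-- The Poisson probability mass function with real mean parameter `μ`. -/
noncomputable def poissonPMF (μ : ℝ) (n : ℕ) : ℝ := Real.exp (-μ) * μ ^ n / n.factorial

/-- Conditional expectation `E[X | X ∈ A]` for `X ~ Poisson(μ)` and a finite set `A ⊆ ℕ`. -/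
noncomputable def condExp (A : Finset ℕ) (μ : ℝ) : ℝ :=
  (∑ x ∈ A, (x : ℝ) * poissonPMF μ x) / (∑ x ∈ A, poissonPMF μ x)

/-- Conditional variance `Var[X | X ∈ A]` for `X ~ Poisson(μ)` and a finite set `A ⊆ ℕ`. -/
noncomputable def condVar (A : Finset ℕ) (μ : ℝ) : ℝ :=
  (∑ x ∈ A, ((x : ℝ) - condExp A μ) ^ 2 * poissonPMF μ x) / (∑ x ∈ A, poissonPMF μ x)

lemma pmf_pos {μ : ℝ} (hμ : 0 < μ) (n : ℕ) : 0 < poissonPMF μ n := by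
  unfold poissonPMF; positivity

lemma hasDerivAt_pmf {μ : ℝ} (hμ : 0 < μ) (n : ℕ) :
    HasDerivAt (fun m => poissonPMF m n) (poissonPMF μ n * ((n : ℝ) / μ - 1)) μ := by
  have h1 : HasDerivAt (fun m : ℝ => Real.exp (-m)) (Real.exp (-μ) * (-1)) μ :=
    ((hasDerivAt_id μ).neg).exp
  have h2 : HasDerivAt (fun m : ℝ => m ^ n) ((n : ℝ) * μ ^ (n - 1)) μ := hasDerivAt_pow n μ
  have h := (h1.mul h2).div_const (n.factorial : ℝ)
  refine h.congr_deriv ?_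
  have hkey : (n : ℝ) * μ ^ (n - 1) = (n : ℝ) * μ ^ n / μ := by
    cases n with
    | zero => simp
    | succ k => rw [Nat.succ_sub_one, pow_succ]; field_simp
  rw [hkey]
  unfold poissonPMF
  field_simp
  ring

/-- For `X ~ Poisson(μ)` with `μ > 0` and a nonempty finite set `A ⊆ ℕ` with `P(X ∈ A) > 0`,
the derivative in `μ` of `E[X | X ∈ A]` equals `(1/μ) ⬝ Var[X | X ∈ A]`, which is
nonnegative, and it is zero if and only if `A` is a singleton. -/
theorem stmt6 (μ : ℝ) (hμ : 0 < μ) (A : Finset ℕ) (hA : A.Nonempty)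
    (hpos : 0 < ∑ x ∈ A, poissonPMF μ x) :
    HasDerivAt (fun m : ℝ => condExp A m) ((1 / μ) * condVar A μ) μ ∧
      0 ≤ (1 / μ) * condVar A μ ∧
      ((1 / μ) * condVar A μ = 0 ↔ ∃ a, A = {a}) := by
  set S : ℝ := ∑ x ∈ A, poissonPMF μ x with hS
  set N : ℝ := ∑ x ∈ A, (x : ℝ) * poissonPMF μ x with hN
  set M : ℝ := ∑ x ∈ A, (x : ℝ) ^ 2 * poissonPMF μ x with hM
  have hSne : S ≠ 0 := ne_of_gt hpos
  have hμne : μ ≠ 0 := ne_of_gt hμ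
  -- derivatives of numerator and denominator
  have hDS : HasDerivAt (fun m : ℝ => ∑ x ∈ A, poissonPMF m x) (N / μ - S) μ := by
    have := HasDerivAt.sum (fun x (_ : x ∈ A) => hasDerivAt_pmf hμ x)
    convert this using 1
    case e'_4 => rfl
    case e'_5 => rfl
    case e'_8 => funext m; simp [Finset.sum_apply]
    rw [hN, hS, Finset.sum_div, ← Finset.sum_sub_distrib]
    apply Finset.sum_congr rfl
    intro x _; ring
  have hDN : HasDerivAt (fun m : ℝ => ∑ x ∈ A, (x : ℝ) * poissonPMF m x) (M / μ - N) μ := by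
    have := HasDerivAt.sum (fun x (_ : x ∈ A) => (hasDerivAt_pmf hμ x).const_mul (x : ℝ))
    convert this using 1
    case e'_4 => rfl
    case e'_5 => rfl
    case e'_8 => funext m; simp [Finset.sum_apply]
    rw [hM, hN, Finset.sum_div, ← Finset.sum_sub_distrib]
    apply Finset.sum_congr rfl
    intro x _; ring
  -- key identity: condVar = M/S - (N/S)^2
  have hCE : condExp A μ = N / S := rfl
  have hvar_num : (∑ x ∈ A, ((x : ℝ) - condExp A μ) ^ 2 * poissonPMF μ x)
      = M - 2 * (N / S) * N + (N / S) ^ 2 * S := by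
    rw [hCE]
    have : ∀ x ∈ A, ((x : ℝ) - N / S) ^ 2 * poissonPMF μ x
        = (x : ℝ) ^ 2 * poissonPMF μ x - 2 * (N / S) * ((x : ℝ) * poissonPMF μ x)
          + (N / S) ^ 2 * poissonPMF μ x := by
      intro x _; ring
    rw [Finset.sum_congr rfl this, Finset.sum_add_distrib, Finset.sum_sub_distrib,
      ← Finset.mul_sum, ← Finset.mul_sum]
  have hvar : condVar A μ = M / S - (N / S) ^ 2 := by
    unfold condVar
    rw [hvar_num, ← hS]
    field_simp
    ring
  -- derivative claim
  have hderiv : HasDerivAt (fun m : ℝ => condExp A m) ((1 / μ) * condVar A μ) μ := by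
    have h := hDN.div hDS hSne
    rw [← hS, ← hN] at h
    convert h using 1
    case e'_4 => rfl
    case e'_5 => rfl
    case e'_8 => rfl
    rw [hvar]
    field_simp
    ring
  refine ⟨hderiv, ?_, ?_⟩
  · apply mul_nonneg (by positivity)
    unfold condVar
    apply div_nonneg _ (le_of_lt hpos)
    apply Finset.sum_nonneg
    intro x _
    exact mul_nonneg (sq_nonneg _) (le_of_lt (pmf_pos hμ x))
  · constructor
    · intro h
      have hv : condVar A μ = 0 := by
        rcases mul_eq_zero.mp h with h' | h'
        · exact absurd h' (by positivity)
        · exact h'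
      have hnum : (∑ x ∈ A, ((x : ℝ) - condExp A μ) ^ 2 * poissonPMF μ x) = 0 := by
        unfold condVar at hv
        exact (div_eq_zero_iff.mp hv).resolve_right hSne
      have hall : ∀ x ∈ A, ((x : ℝ) - condExp A μ) ^ 2 * poissonPMF μ x = 0 := by
        rw [← Finset.sum_eq_zero_iff_of_nonneg]
        · exact hnum
        · intro x _
          exact mul_nonneg (sq_nonneg _) (le_of_lt (pmf_pos hμ x))
      obtain ⟨a, ha⟩ := hA
      refine ⟨a, ?_⟩
      have hval : ∀ x ∈ A, (x : ℝ) = condExp A μ := by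
        intro x hx
        have := hall x hx
        have hp := (pmf_pos hμ x).ne'
        have : ((x : ℝ) - condExp A μ) ^ 2 = 0 := by
          rcases mul_eq_zero.mp this with h' | h'
          · exact h'
          · exact absurd h' hp
        have := pow_eq_zero_iff (n := 2) (by norm_num) |>.mp this
        linarith [sub_eq_zero.mp this]
      apply Finset.eq_singleton_iff_unique_mem.mpr
      refine ⟨ha, ?_⟩
      intro x hx
      have h1 := hval x hx
      have h2 := hval a ha
      exact_mod_cast h1.trans h2.symm
    · rintro ⟨a, rfl⟩
      have : condExp {a} μ = (a : ℝ) := by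
        unfold condExp
        rw [Finset.sum_singleton, Finset.sum_singleton,
          mul_div_assoc, div_self (pmf_pos hμ a).ne', mul_one]
      unfold condVar
      rw [Finset.sum_singleton, this]
      simp
end

section
/- For a Poisson random variable X with mean μ > 0 and positive integer q, as μ → ∞ the ratio (E[X_q])³ / E[X_{q+1}(X_{q+1}-1)(X_{q+1}-2)] converges to q²/(q²-1) (for q ≥ 2). -/
open Filter

lemma poisson_summable (μ : ℝ) : Summable (fun n => poissonPMF μ n) := by
  simpa [poissonPMF, mul_div_assoc] using
    (Real.summable_pow_div_factorial μ).mul_left (Real.exp (-μ))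

lemma poisson_tsum (μ : ℝ) : ∑' n, poissonPMF μ n = 1 := by
  have h : ∑' n : ℕ, μ ^ n / n.factorial = Real.exp μ := by
    rw [Real.exp_eq_exp_ℝ, NormedSpace.exp_eq_tsum_div]
  calc ∑' n, poissonPMF μ n = Real.exp (-μ) * ∑' n : ℕ, μ ^ n / n.factorial := by
        rw [← tsum_mul_left]; simp [poissonPMF, mul_div_assoc]
    _ = 1 := by rw [h, ← Real.exp_add]; simp

lemma tsum_key (μ : ℝ) (f : ℕ → ℝ) (m : ℕ) (c : ℝ) (hf : ∀ n, m ≤ n → f n = c) :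
    ∑' n, poissonPMF μ n * f n = c + ∑ n ∈ Finset.range m, poissonPMF μ n * (f n - c) := by
  have hg : ∀ n ∉ Finset.range m, poissonPMF μ n * (f n - c) = 0 := by
    intro n hn
    rw [hf n (by simpa using hn)]; ring
  have hsum : (fun n => poissonPMF μ n * f n)
      = fun n => poissonPMF μ n * c + poissonPMF μ n * (f n - c) := by
    funext n; ring
  rw [hsum, Summable.tsum_add ((poisson_summable μ).mul_right c) (summable_of_ne_finset_zero hg),
    tsum_mul_right, poisson_tsum, one_mul, tsum_eq_sum hg]

lemma poisson_tendsto (n : ℕ) : Tendsto (fun μ : ℝ => poissonPMF μ n) atTop (nhds 0) := by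
  have h := (Real.tendsto_pow_mul_exp_neg_atTop_nhds_zero n).div_const (n.factorial : ℝ)
  simp only [zero_div] at h
  refine h.congr fun μ => ?_
  simp [poissonPMF, mul_comm]

lemma tendsto_poisson_tsum (f : ℕ → ℝ) (m : ℕ) (c : ℝ) (hf : ∀ n, m ≤ n → f n = c) :
    Tendsto (fun μ : ℝ => ∑' n, poissonPMF μ n * f n) atTop (nhds c) := by
  have heq : (fun μ : ℝ => ∑' n, poissonPMF μ n * f n)
      = fun μ => c + ∑ n ∈ Finset.range m, poissonPMF μ n * (f n - c) := by
    funext μ; exact tsum_key μ f m c hf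
  rw [heq]
  have h0 : Tendsto (fun μ : ℝ => ∑ n ∈ Finset.range m, poissonPMF μ n * (f n - c))
      atTop (nhds 0) := by
    have := tendsto_finset_sum (Finset.range m)
      (fun n _ => (poisson_tendsto n).mul_const (f n - c))
    simpa using this
  simpa using tendsto_const_nhds.add h0

/-- For `X ~ Poisson(μ)` and an integer `q ≥ 2`, as `μ → ∞` the ratio
`(E[X_q])³ / E[X_{q+1} (X_{q+1} - 1) (X_{q+1} - 2)]` converges to `q² / (q² - 1)`,
where `X_m = min(X, m)`. -/
theorem stmt9 (q : ℕ) (hq : 2 ≤ q) :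
    Tendsto
      (fun μ : ℝ =>
        (∑' n : ℕ, poissonPMF μ n * (min n q : ℝ)) ^ 3 /
          (∑' n : ℕ, poissonPMF μ n * ((min n (q + 1)).descFactorial 3 : ℝ)))
      atTop (nhds ((q : ℝ) ^ 2 / ((q : ℝ) ^ 2 - 1))) := by
  have h1 : Tendsto (fun μ : ℝ => ∑' n : ℕ, poissonPMF μ n * (min n q : ℝ)) atTop
      (nhds (q : ℝ)) := by
    apply tendsto_poisson_tsum (fun n => (min n q : ℝ)) q
    intro n hn
    exact min_eq_right (by exact_mod_cast hn)
  have h2 : Tendsto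
      (fun μ : ℝ => ∑' n : ℕ, poissonPMF μ n * ((min n (q + 1)).descFactorial 3 : ℝ)) atTop
      (nhds (((q + 1).descFactorial 3 : ℕ) : ℝ)) := by
    apply tendsto_poisson_tsum _ (q + 1)
    intro n hn
    rw [min_eq_right hn]
  have hne : (((q + 1).descFactorial 3 : ℕ) : ℝ) ≠ 0 := by
    have h : (q + 1).descFactorial 3 ≠ 0 := by
      rw [Ne, Nat.descFactorial_eq_zero_iff_lt]; omega
    exact_mod_cast h
  have := (h1.pow 3).div h2 hne
  convert this using 2
  · rfl
  have hd : ((q + 1).descFactorial 3 : ℕ) = (q + 1) * q * (q - 1) := by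
    simp [Nat.descFactorial]
    ring
  rw [hd]
  have hq1 : (1:ℕ) ≤ q := by omega
  push_cast [hq1]
  have hq2 : (2:ℝ) ≤ (q:ℝ) := by exact_mod_cast hq
  have hne1 : (q:ℝ) - 1 ≠ 0 := by nlinarith
  have hne2 : (q:ℝ) + 1 ≠ 0 := by nlinarith
  have hne3 : (q:ℝ) ^ 2 - 1 ≠ 0 := by nlinarith
  field_simp
  ring
end
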